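/- Under the distributed two-time-scale setup, for every k ≥ 0 the Frobenius norms of the consensus-error matrices satisfy ‖Ŷ_{k+1}‖ ≤ (σ + β_k)·‖Ŷ_k‖ + β_k·‖X̂_k‖ + √N·(R + C)·β_k. -/

import Mathlib

/-- The Euclidean norm of a vector (represented as a function into `ℝ`). -/
noncomputable def enorm {n : ℕ} (v : Fin n → ℝ) : ℝ :=
  Real.sqrt (∑ i, v i ^ 2)

/-- The Frobenius norm of an `N×d` real matrix. -/
noncomputable def fnorm {N d : ℕ} (M : Matrix (Fin N) (Fin d) ℝ) : ℝ :=
  Real.sqrt (∑ i, ∑ j, M i j ^ 2)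

lemma s7_sqrt_sum_sq_add_le {ι : Type*} [Fintype ι] (f g h : ι → ℝ)
    (hh : ∀ i, h i = f i + g i) :
    Real.sqrt (∑ i, h i ^ 2)
      ≤ Real.sqrt (∑ i, f i ^ 2) + Real.sqrt (∑ i, g i ^ 2) := by
  have key : ∀ v : ι → ℝ, Real.sqrt (∑ i, v i ^ 2)
      = ‖(WithLp.equiv 2 (ι → ℝ)).symm v‖ := by
    intro v
    rw [EuclideanSpace.norm_eq]
    simp [Real.norm_eq_abs, sq_abs]
  have hfg : h = f + g := funext hh
  rw [key h, key f, key g, hfg]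
  exact norm_add_le ((WithLp.equiv 2 (ι → ℝ)).symm f) ((WithLp.equiv 2 (ι → ℝ)).symm g)

lemma s7_fnorm_eq_prod {N d : ℕ} (M : Matrix (Fin N) (Fin d) ℝ) :
    fnorm M = Real.sqrt (∑ p : Fin N × Fin d, M p.1 p.2 ^ 2) := by
  rw [fnorm, Fintype.sum_prod_type]

lemma s7_fnorm_add_le {N d : ℕ} (A B : Matrix (Fin N) (Fin d) ℝ) :
    fnorm (A + B) ≤ fnorm A + fnorm B := by
  rw [s7_fnorm_eq_prod, s7_fnorm_eq_prod, s7_fnorm_eq_prod]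
  apply s7_sqrt_sum_sq_add_le
  intro p
  rfl

lemma s7_fnorm_nonneg {N d : ℕ} (M : Matrix (Fin N) (Fin d) ℝ) : 0 ≤ fnorm M :=
  Real.sqrt_nonneg _

lemma s7_fnorm_smul {N d : ℕ} (c : ℝ) (M : Matrix (Fin N) (Fin d) ℝ) :
    fnorm (c • M) = |c| * fnorm M := by
  unfold fnorm
  simp only [Matrix.smul_apply, smul_eq_mul, mul_pow, ← Finset.mul_sum]
  rw [Real.sqrt_mul (sq_nonneg c), Real.sqrt_sq_eq_abs]

lemma s7_fnorm_neg {N d : ℕ} (M : Matrix (Fin N) (Fin d) ℝ) : fnorm (-M) = fnorm M := by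
  unfold fnorm; simp

lemma s7_fnorm_sub_le {N d : ℕ} (A B : Matrix (Fin N) (Fin d) ℝ) :
    fnorm (A - B) ≤ fnorm A + fnorm B := by
  rw [sub_eq_add_neg]
  calc fnorm (A + -B) ≤ fnorm A + fnorm (-B) := s7_fnorm_add_le A (-B)
  _ = fnorm A + fnorm B := by rw [s7_fnorm_neg]

lemma s7_fnorm_mono {N d : ℕ} {A B : Matrix (Fin N) (Fin d) ℝ}
    (h : ∀ i, ∑ j, A i j ^ 2 ≤ ∑ j, B i j ^ 2) : fnorm A ≤ fnorm B :=
  Real.sqrt_le_sqrt (Finset.sum_le_sum fun i _ => h i)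

lemma s7_fnorm_cols {N d : ℕ} (M : Matrix (Fin N) (Fin d) ℝ) :
    fnorm M = Real.sqrt (∑ j, ∑ i, M i j ^ 2) := by
  rw [fnorm, Finset.sum_comm]

lemma s7_sq_enorm {n : ℕ} (v : Fin n → ℝ) : _root_.enorm v ^ 2 = ∑ i, v i ^ 2 :=
  Real.sq_sqrt (Finset.sum_nonneg fun i _ => sq_nonneg _)

lemma s7_sq_le_of_sqrt_le {a b : ℝ} (ha : 0 ≤ a) (hb : 0 ≤ b)
    (h : Real.sqrt a ≤ Real.sqrt b) : a ≤ b := by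
  have := pow_le_pow_left₀ (Real.sqrt_nonneg a) h 2
  rwa [Real.sq_sqrt ha, Real.sq_sqrt hb] at this

lemma s7_centered {N : ℕ} (hN : 0 < N) (b : Fin N → ℝ) (m : ℝ)
    (hm : m = (1 / (N : ℝ)) * ∑ i, b i) :
    ∑ i, (b i - m) ^ 2 ≤ ∑ i, b i ^ 2 := by
  have hNpos : (0 : ℝ) < N := by exact_mod_cast hN
  have hsum : ∑ i, b i = (N : ℝ) * m := by
    rw [hm]; field_simp
  have expand : ∑ i, (b i - m) ^ 2
      = (∑ i, b i ^ 2) - 2 * m * (∑ i, b i) + (N : ℝ) * m ^ 2 := by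
    have : ∀ i : Fin N, (b i - m) ^ 2 = b i ^ 2 - 2 * m * b i + m ^ 2 := by
      intro i; ring
    rw [Finset.sum_congr rfl fun i _ => this i]
    rw [Finset.sum_add_distrib, Finset.sum_sub_distrib, Finset.sum_const,
      Finset.card_univ, Fintype.card_fin, ← Finset.mul_sum, nsmul_eq_mul]
  rw [expand, hsum]
  nlinarith [sq_nonneg m, hNpos]

-- average of mulVec
lemma s7_mulVec_avg {N d : ℕ} (A : Matrix (Fin d) (Fin d) ℝ)
    (z : Fin N → Fin d → ℝ) (j : Fin d) :
    A.mulVec ((1 / (N : ℝ)) • ∑ i, z i) j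
      = (1 / (N : ℝ)) * ∑ i, A.mulVec (z i) j := by
  simp only [Matrix.mulVec, dotProduct, Pi.smul_apply, Finset.sum_apply,
    smul_eq_mul, Finset.mul_sum]
  rw [Finset.sum_comm]
  apply Finset.sum_congr rfl
  intro i _
  apply Finset.sum_congr rfl
  intro t _
  ring
/-- Under the distributed two-time-scale setup, for every `k ≥ 0` the Frobenius
norms of the consensus-error matrices satisfy
`‖Ŷ_{k+1}‖ ≤ (σ + β_k)‖Ŷ_k‖ + β_k‖X̂_k‖ + √N(R+C)β_k`. -/
theorem stmt_7
    {N d : ℕ} (hN : 0 < N) (hd : 0 < d) (R C : ℝ) (hR : 0 ≤ R) (hC : 0 ≤ C)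
    (W V : Matrix (Fin N) (Fin N) ℝ)
    (hWnonneg : ∀ i j, 0 ≤ W i j) (hWrow : ∀ i, ∑ j, W i j = 1)
    (hWcol : ∀ j, ∑ i, W i j = 1)
    (hVnonneg : ∀ i j, 0 ≤ V i j) (hVrow : ∀ i, ∑ j, V i j = 1)
    (hVcol : ∀ j, ∑ i, V i j = 1)
    (σ : ℝ) (hσ0 : 0 < σ) (hσ1 : σ < 1)
    (hWcontract : ∀ v : Fin N → ℝ, (∑ i, v i = 0) → _root_.enorm (W.mulVec v) ≤ σ * _root_.enorm v)
    (hVcontract : ∀ v : Fin N → ℝ, (∑ i, v i = 0) → _root_.enorm (V.mulVec v) ≤ σ * _root_.enorm v)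
    (A11 A12 A21 A22 : Matrix (Fin d) (Fin d) ℝ)
    (hA11 : ∀ v, _root_.enorm (A11.mulVec v) ≤ _root_.enorm v)
    (hA12 : ∀ v, _root_.enorm (A12.mulVec v) ≤ _root_.enorm v)
    (hA21 : ∀ v, _root_.enorm (A21.mulVec v) ≤ _root_.enorm v)
    (hA22 : ∀ v, _root_.enorm (A22.mulVec v) ≤ _root_.enorm v)
    (b1 b2 : Fin N → Fin d → ℝ)
    (hb1 : ∀ i, _root_.enorm (b1 i) ≤ R) (hb2 : ∀ i, _root_.enorm (b2 i) ≤ R)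
    (ξ ψ : ℕ → Fin N → Fin d → ℝ)
    (hξ : ∀ k i, _root_.enorm (ξ k i) ≤ C) (hψ : ∀ k i, _root_.enorm (ψ k i) ≤ C)
    (α0 β0 : ℝ) (hβ0 : 0 < β0) (hβα : β0 ≤ α0)
    (α β : ℕ → ℝ)
    (hα : ∀ k, α k = α0 / ((k : ℝ) + 1) ^ ((2 : ℝ) / 3))
    (hβ : ∀ k, β k = β0 / ((k : ℝ) + 1))
    (x y : ℕ → Fin N → Fin d → ℝ)
    (hx0 : ∀ i, x 0 i = 0) (hy0 : ∀ i, y 0 i = 0)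
    (hxrec : ∀ k i, x (k + 1) i =
      (∑ j, W i j • x k j) -
        α k • (A11.mulVec (x k i) + A12.mulVec (y k i) - b1 i + ξ k i))
    (hyrec : ∀ k i, y (k + 1) i =
      (∑ j, V i j • y k j) -
        β k • (A21.mulVec (x k i) + A22.mulVec (y k i) - b2 i + ψ k i))
    (xbar ybar : ℕ → Fin d → ℝ)
    (hxbar : ∀ k, xbar k = (1 / (N : ℝ)) • ∑ i, x k i)
    (hybar : ∀ k, ybar k = (1 / (N : ℝ)) • ∑ i, y k i)
    (Xhat Yhat : ℕ → Matrix (Fin N) (Fin d) ℝ)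
    (hXhat : ∀ k, Xhat k = Matrix.of fun i j => x k i j - xbar k j)
    (hYhat : ∀ k, Yhat k = Matrix.of fun i j => y k i j - ybar k j)
    (k : ℕ) :
    fnorm (Yhat (k + 1)) ≤ (σ + β k) * fnorm (Yhat k) + β k * fnorm (Xhat k)
      + Real.sqrt N * (R + C) * β k := by
  have hNpos : (0 : ℝ) < N := by exact_mod_cast hN
  have hNne : (N : ℝ) ≠ 0 := ne_of_gt hNpos
  have hβk : 0 < β k := by
    rw [hβ]; positivity
  -- the drift term
  set g : Fin N → Fin d → ℝ :=
    fun i => A21.mulVec (x k i) + A22.mulVec (y k i) - b2 i + ψ k i with hg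
  have hyrec' : ∀ i, y (k + 1) i = (∑ l, V i l • y k l) - β k • g i := hyrec k
  -- sum of the next iterates
  have hsumy : ∑ i, y (k + 1) i = (∑ i, y k i) - β k • ∑ i, g i := by
    calc ∑ i, y (k + 1) i = ∑ i, ((∑ l, V i l • y k l) - β k • g i) := by
          exact Finset.sum_congr rfl fun i _ => hyrec' i
      _ = (∑ i, ∑ l, V i l • y k l) - ∑ i, β k • g i := Finset.sum_sub_distrib _ _
      _ = (∑ i, y k i) - β k • ∑ i, g i := by
          rw [Finset.sum_comm]
          congr 1
          · refine Finset.sum_congr rfl fun l _ => ?_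
            rw [← Finset.sum_smul, hVcol l, one_smul]
          · rw [Finset.smul_sum]
  have hybar1 : ybar (k + 1) = ybar k - β k • ((1 / (N : ℝ)) • ∑ i, g i) := by
    rw [hybar, hybar, hsumy, smul_sub, smul_comm]
  -- entrywise identity
  have key : ∀ i j, Yhat (k + 1) i j =
      (∑ l, V i l * Yhat k l j) - β k * (g i j - (1 / (N : ℝ)) * ∑ l, g l j) := by
    intro i j
    have h1 : y (k + 1) i j = (∑ l, V i l * y k l j) - β k * g i j := by
      rw [hyrec']
      simp [Finset.sum_apply, Pi.smul_apply, smul_eq_mul]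
    have h2 : ybar (k + 1) j = ybar k j - β k * ((1 / (N : ℝ)) * ∑ l, g l j) := by
      rw [hybar1]
      simp [Finset.sum_apply, Pi.smul_apply, smul_eq_mul]
    have hrow : ∑ l, V i l * Yhat k l j = (∑ l, V i l * y k l j) - ybar k j := by
      have : ∀ l : Fin N, V i l * Yhat k l j = V i l * y k l j - V i l * ybar k j := by
        intro l
        rw [hYhat]
        simp only [Matrix.of_apply]
        ring
      rw [Finset.sum_congr rfl fun l _ => this l, Finset.sum_sub_distrib,
        ← Finset.sum_mul, hVrow i, one_mul]
    rw [hYhat]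
    simp only [Matrix.of_apply]
    rw [h1, h2, hrow]
    ring
  -- the two matrices
  set T : Matrix (Fin N) (Fin d) ℝ :=
    Matrix.of fun i j => ∑ l, V i l * Yhat k l j with hT
  set Gm : Matrix (Fin N) (Fin d) ℝ :=
    Matrix.of fun i j => g i j - (1 / (N : ℝ)) * ∑ l, g l j with hGm
  have hsplit : Yhat (k + 1) = T - β k • Gm := by
    ext i j
    rw [Matrix.sub_apply, Matrix.smul_apply, hT, hGm]
    simp only [Matrix.of_apply, smul_eq_mul]
    exact key i j
  have step1 : fnorm (Yhat (k + 1)) ≤ fnorm T + β k * fnorm Gm := by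
    rw [hsplit]
    calc fnorm (T - β k • Gm) ≤ fnorm T + fnorm (β k • Gm) := s7_fnorm_sub_le _ _
      _ = fnorm T + β k * fnorm Gm := by
          rw [s7_fnorm_smul, abs_of_pos hβk]
  -- columns of Yhat k sum to zero
  have hcolsum : ∀ j, ∑ i, Yhat k i j = 0 := by
    intro j
    have hyb : ybar k j = (1 / (N : ℝ)) * ∑ i, y k i j := by
      rw [hybar]
      simp [Finset.sum_apply, Pi.smul_apply, smul_eq_mul]
    have : ∀ i : Fin N, Yhat k i j = y k i j - ybar k j := by
      intro i; rw [hYhat]; simp only [Matrix.of_apply]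
    rw [Finset.sum_congr rfl fun i _ => this i, Finset.sum_sub_distrib,
      Finset.sum_const, Finset.card_univ, Fintype.card_fin, nsmul_eq_mul, hyb]
    field_simp
    ring
  -- step B : fnorm T ≤ σ * fnorm (Yhat k)
  have hcol : ∀ j, ∑ i, T i j ^ 2 ≤ σ ^ 2 * ∑ i, Yhat k i j ^ 2 := by
    intro j
    have hc := hVcontract (fun l => Yhat k l j) (hcolsum j)
    have hle : Real.sqrt (∑ i, T i j ^ 2)
        ≤ σ * Real.sqrt (∑ i, Yhat k i j ^ 2) := by
      have e1 : _root_.enorm (V.mulVec fun l => Yhat k l j) = Real.sqrt (∑ i, T i j ^ 2) := by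
        rw [_root_.enorm]
        congr 1
      have e2 : _root_.enorm (fun l => Yhat k l j) = Real.sqrt (∑ i, Yhat k i j ^ 2) := rfl
      rw [e1, e2] at hc
      exact hc
    have h2 : σ * Real.sqrt (∑ i, Yhat k i j ^ 2)
        = Real.sqrt (σ ^ 2 * ∑ i, Yhat k i j ^ 2) := by
      rw [Real.sqrt_mul (sq_nonneg σ), Real.sqrt_sq hσ0.le]
    rw [h2] at hle
    exact s7_sq_le_of_sqrt_le (Finset.sum_nonneg fun i _ => sq_nonneg _)
      (by positivity) hle
  have stepB : fnorm T ≤ σ * fnorm (Yhat k) := by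
    rw [s7_fnorm_cols T, s7_fnorm_cols (Yhat k)]
    calc Real.sqrt (∑ j, ∑ i, T i j ^ 2)
        ≤ Real.sqrt (∑ j, σ ^ 2 * ∑ i, Yhat k i j ^ 2) :=
          Real.sqrt_le_sqrt (Finset.sum_le_sum fun j _ => hcol j)
      _ = σ * Real.sqrt (∑ j, ∑ i, Yhat k i j ^ 2) := by
          rw [← Finset.mul_sum, Real.sqrt_mul (sq_nonneg σ), Real.sqrt_sq hσ0.le]
  -- step C : decompose Gm
  set M1 : Matrix (Fin N) (Fin d) ℝ :=
    Matrix.of fun i j => A21.mulVec (Xhat k i) j with hM1d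
  set M2 : Matrix (Fin N) (Fin d) ℝ :=
    Matrix.of fun i j => A22.mulVec (Yhat k i) j with hM2d
  set M3 : Matrix (Fin N) (Fin d) ℝ :=
    Matrix.of fun i j => (1 / (N : ℝ)) * (∑ l, b2 l j) - b2 i j with hM3d
  set M4 : Matrix (Fin N) (Fin d) ℝ :=
    Matrix.of fun i j => ψ k i j - (1 / (N : ℝ)) * (∑ l, ψ k l j) with hM4d
  have hXrow : ∀ i, Xhat k i = x k i - xbar k := by
    intro i; funext j; rw [hXhat]; simp [Matrix.of_apply]
  have hYrow : ∀ i, Yhat k i = y k i - ybar k := by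
    intro i; funext j; rw [hYhat]; simp [Matrix.of_apply]
  have hGdec : Gm = M1 + M2 + M3 + M4 := by
    ext i j
    simp only [Matrix.add_apply, hGm, hM1d, hM2d, hM3d, hM4d, Matrix.of_apply]
    have hgij : ∀ l, g l j = A21.mulVec (x k l) j + A22.mulVec (y k l) j
        - b2 l j + ψ k l j := by
      intro l
      simp [hg, Pi.add_apply, Pi.sub_apply]
    have hgsum : ∑ l, g l j = (∑ l, A21.mulVec (x k l) j)
        + (∑ l, A22.mulVec (y k l) j) - (∑ l, b2 l j) + (∑ l, ψ k l j) := by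
      rw [Finset.sum_congr rfl fun l _ => hgij l]
      rw [Finset.sum_add_distrib, Finset.sum_sub_distrib, Finset.sum_add_distrib]
    have hm1 : A21.mulVec (Xhat k i) j
        = A21.mulVec (x k i) j - (1 / (N : ℝ)) * ∑ l, A21.mulVec (x k l) j := by
      rw [hXrow, Matrix.mulVec_sub, Pi.sub_apply]
      congr 1
      rw [hxbar]
      exact s7_mulVec_avg A21 (x k) j
    have hm2 : A22.mulVec (Yhat k i) j
        = A22.mulVec (y k i) j - (1 / (N : ℝ)) * ∑ l, A22.mulVec (y k l) j := by
      rw [hYrow, Matrix.mulVec_sub, Pi.sub_apply]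
      congr 1
      rw [hybar]
      exact s7_mulVec_avg A22 (y k) j
    rw [hgij i, hgsum, hm1, hm2]
    ring
  have htriangle : fnorm Gm ≤ fnorm M1 + fnorm M2 + fnorm M3 + fnorm M4 := by
    rw [hGdec]
    calc fnorm (M1 + M2 + M3 + M4) ≤ fnorm (M1 + M2 + M3) + fnorm M4 :=
          s7_fnorm_add_le _ _
      _ ≤ (fnorm (M1 + M2) + fnorm M3) + fnorm M4 := by
          have := s7_fnorm_add_le (M1 + M2) M3
          linarith
      _ ≤ ((fnorm M1 + fnorm M2) + fnorm M3) + fnorm M4 := by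
          have := s7_fnorm_add_le M1 M2
          linarith
  have hM1b : fnorm M1 ≤ fnorm (Xhat k) := by
    apply s7_fnorm_mono
    intro i
    have := hA21 (Xhat k i)
    have h1 : _root_.enorm (A21.mulVec (Xhat k i)) = Real.sqrt (∑ j, M1 i j ^ 2) := by
      rw [_root_.enorm]
      congr 1
    have h2 : _root_.enorm (Xhat k i) = Real.sqrt (∑ j, Xhat k i j ^ 2) := rfl
    rw [h1, h2] at this
    exact s7_sq_le_of_sqrt_le (Finset.sum_nonneg fun j _ => sq_nonneg _)
      (Finset.sum_nonneg fun j _ => sq_nonneg _) this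
  have hM2b : fnorm M2 ≤ fnorm (Yhat k) := by
    apply s7_fnorm_mono
    intro i
    have := hA22 (Yhat k i)
    have h1 : _root_.enorm (A22.mulVec (Yhat k i)) = Real.sqrt (∑ j, M2 i j ^ 2) := by
      rw [_root_.enorm]
      congr 1
    have h2 : _root_.enorm (Yhat k i) = Real.sqrt (∑ j, Yhat k i j ^ 2) := rfl
    rw [h1, h2] at this
    exact s7_sq_le_of_sqrt_le (Finset.sum_nonneg fun j _ => sq_nonneg _)
      (Finset.sum_nonneg fun j _ => sq_nonneg _) this
  -- bound for a centered data matrix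
  have hcenter : ∀ (z : Fin N → Fin d → ℝ) (Rz : ℝ), 0 ≤ Rz →
      (∀ i, _root_.enorm (z i) ≤ Rz) →
      ∀ (Mz : Matrix (Fin N) (Fin d) ℝ),
      (∀ i j, Mz i j ^ 2 = (z i j - (1 / (N : ℝ)) * ∑ l, z l j) ^ 2) →
      fnorm Mz ≤ Real.sqrt N * Rz := by
    intro z Rz hRz hz Mz hMz
    have hcols : ∀ j, ∑ i, Mz i j ^ 2 ≤ ∑ i, z i j ^ 2 := by
      intro j
      rw [Finset.sum_congr rfl fun i _ => hMz i j]
      exact s7_centered hN (fun i => z i j) _ rfl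
    have hbound : ∑ i, ∑ j, Mz i j ^ 2 ≤ (N : ℝ) * Rz ^ 2 := by
      calc ∑ i, ∑ j, Mz i j ^ 2 = ∑ j, ∑ i, Mz i j ^ 2 := Finset.sum_comm
        _ ≤ ∑ j, ∑ i, z i j ^ 2 := Finset.sum_le_sum fun j _ => hcols j
        _ = ∑ i, ∑ j, z i j ^ 2 := Finset.sum_comm
        _ ≤ ∑ i : Fin N, Rz ^ 2 := by
            refine Finset.sum_le_sum fun i _ => ?_
            have h1 : _root_.enorm (z i) = Real.sqrt (∑ j, z i j ^ 2) := rfl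
            have h2 := hz i
            rw [h1] at h2
            have := s7_sq_le_of_sqrt_le (Finset.sum_nonneg fun j _ => sq_nonneg _)
              (sq_nonneg Rz) (by rwa [Real.sqrt_sq hRz])
            · exact this
        _ = (N : ℝ) * Rz ^ 2 := by
            rw [Finset.sum_const, Finset.card_univ, Fintype.card_fin, nsmul_eq_mul]
    calc fnorm Mz ≤ Real.sqrt ((N : ℝ) * Rz ^ 2) := Real.sqrt_le_sqrt hbound
      _ = Real.sqrt N * Rz := by
          rw [Real.sqrt_mul (le_of_lt hNpos), Real.sqrt_sq hRz]
  have hM3b : fnorm M3 ≤ Real.sqrt N * R := by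
    refine hcenter b2 R hR hb2 M3 fun i j => ?_
    rw [hM3d]
    simp only [Matrix.of_apply]
    ring
  have hM4b : fnorm M4 ≤ Real.sqrt N * C := by
    refine hcenter (ψ k) C hC (hψ k) M4 fun i j => ?_
    rw [hM4d]
    simp only [Matrix.of_apply]
  have stepC : fnorm Gm ≤ fnorm (Xhat k) + fnorm (Yhat k)
      + Real.sqrt N * R + Real.sqrt N * C := by
    linarith
  -- final assembly
  have final : fnorm (Yhat (k + 1)) ≤ σ * fnorm (Yhat k)
      + β k * (fnorm (Xhat k) + fnorm (Yhat k) + Real.sqrt N * R + Real.sqrt N * C) := by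
    calc fnorm (Yhat (k + 1)) ≤ fnorm T + β k * fnorm Gm := step1
      _ ≤ σ * fnorm (Yhat k)
          + β k * (fnorm (Xhat k) + fnorm (Yhat k) + Real.sqrt N * R + Real.sqrt N * C) := by
          have := mul_le_mul_of_nonneg_left stepC (le_of_lt hβk)
          linarith
  calc fnorm (Yhat (k + 1)) ≤ σ * fnorm (Yhat k)
      + β k * (fnorm (Xhat k) + fnorm (Yhat k) + Real.sqrt N * R + Real.sqrt N * C) := final
    _ = (σ + β k) * fnorm (Yhat k) + β k * fnorm (Xhat k)
        + Real.sqrt N * (R + C) * β k := by ring
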